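/- Minimax theorem for finite matrix games: For any real m×n matrix R, max over probability vectors y ∈ Δ_m of min over probability vectors z ∈ Δ_n of yᵀRz equals min over z ∈ Δ_n of max over y ∈ Δ_m of yᵀRz. -/

import Mathlib

/-- Expected payoff `yᵀ R z` of the matrix game `R` under mixed strategies `y` and `z`. -/
def matrixPayoff {m n : ℕ} (R : Matrix (Fin m) (Fin n) ℝ) (y : Fin m → ℝ) (z : Fin n → ℝ) : ℝ :=
  ∑ u, ∑ v, y u * R u v * z v

lemma payoff_row {m n : ℕ} (R : Matrix (Fin m) (Fin n) ℝ) (y : Fin m → ℝ) (z : Fin n → ℝ) :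
    matrixPayoff R y z = ∑ u, y u * (∑ v, R u v * z v) := by
  simp [matrixPayoff, Finset.mul_sum, mul_assoc]

lemma payoff_col {m n : ℕ} (R : Matrix (Fin m) (Fin n) ℝ) (y : Fin m → ℝ) (z : Fin n → ℝ) :
    matrixPayoff R y z = ∑ v, (∑ u, y u * R u v) * z v := by
  rw [matrixPayoff, Finset.sum_comm]
  simp [Finset.sum_mul]

lemma minimax_key {m n : ℕ} (hm : 0 < m) (hn : 0 < n) (R : Matrix (Fin m) (Fin n) ℝ) :
    (∃ z ∈ stdSimplex ℝ (Fin n), ∀ y ∈ stdSimplex ℝ (Fin m), matrixPayoff R y z ≤ 0) ∨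
    (∃ y ∈ stdSimplex ℝ (Fin m), ∀ z ∈ stdSimplex ℝ (Fin n), 0 < matrixPayoff R y z) := by
  classical
  set p : (Fin n ⊕ Fin m) → (Fin m → ℝ) :=
    Sum.elim (fun j u => R u j) (fun i => Pi.single i 1) with hp
  by_cases h0 : (0 : Fin m → ℝ) ∈ convexHull ℝ (Set.range p)
  · left
    rw [convexHull_range_eq_exists_affineCombination] at h0
    obtain ⟨s, w, hw0, hw1, hcomb⟩ := h0
    rw [Finset.affineCombination_eq_linear_combination _ _ _ hw1] at hcomb
    set w' : Fin n ⊕ Fin m → ℝ := fun k => if k ∈ s then w k else 0 with hw'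
    have hw'0 : ∀ k, 0 ≤ w' k := by
      intro k; simp only [hw']; split
      · exact hw0 _ ‹_›
      · exact le_refl 0
    have hsum1 : ∑ k, w' k = 1 := by
      rw [← hw1, Finset.sum_ite_mem, Finset.univ_inter]
    have hvec : ∑ k, w' k • p k = 0 := by
      rw [← hcomb]
      rw [← Finset.sum_subset (Finset.subset_univ s) (by intro k _ hk; simp [hw', hk])]
      exact Finset.sum_congr rfl (fun k hk => by simp [hw', hk])
    have hcoord : ∀ u, (∑ j, w' (.inl j) * R u j) + w' (.inr u) = 0 := by
      intro u
      have := congrFun hvec u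
      rw [Fintype.sum_sum_type] at this
      simpa [hp, Pi.single_apply, mul_comm] using this
    set S := ∑ j, w' (.inl j) with hS
    have hS0 : 0 ≤ S := Finset.sum_nonneg fun j _ => hw'0 _
    have hSne : S ≠ 0 := by
      intro h
      have hz : ∀ j, w' (.inl j) = 0 := fun j =>
        (Finset.sum_eq_zero_iff_of_nonneg (fun j _ => hw'0 (Sum.inl j))).mp h j (Finset.mem_univ j)
      have hy : ∀ u, w' (.inr u) = 0 := by
        intro u
        have := hcoord u
        simpa [hz] using this
      have : (1:ℝ) = 0 := by
        rw [← hsum1, Fintype.sum_sum_type]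
        simp [hz, hy]
      norm_num at this
    refine ⟨fun j => w' (.inl j) / S, ⟨fun j => div_nonneg (hw'0 _) hS0, ?_⟩, ?_⟩
    · rw [← Finset.sum_div, ← hS, div_self hSne]
    · intro y hy
      rw [payoff_row]
      apply Finset.sum_nonpos
      intro u _
      have hterm : (∑ v, R u v * (w' (.inl v) / S)) ≤ 0 := by
        have : (∑ v, R u v * (w' (.inl v) / S)) = (∑ v, w' (.inl v) * R u v) / S := by
          rw [Finset.sum_div]
          exact Finset.sum_congr rfl fun v _ => by ring
        rw [this]
        apply div_nonpos_of_nonpos_of_nonneg _ hS0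
        have := hcoord u
        have h2 := hw'0 (Sum.inr u)
        linarith
      exact mul_nonpos_of_nonneg_of_nonpos (hy.1 u) hterm
  · right
    have hC : Convex ℝ (convexHull ℝ (Set.range p)) := convex_convexHull _ _
    have hcl : IsClosed (convexHull ℝ (Set.range p)) :=
      ((Set.finite_range p).isCompact_convexHull (𝕜 := ℝ)).isClosed
    obtain ⟨f, u, hfu, hub⟩ := geometric_hahn_banach_point_closed hC hcl h0
    have hf0 : f 0 = 0 := map_zero f
    have hupos : 0 < u := by rw [← hf0]; exact hfu
    have hfform : ∀ b : Fin m → ℝ, f b = ∑ i, b i * f (Pi.single i 1) := by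
      intro b
      have hb : f b = f (∑ i, Pi.single i (b i)) := by rw [Finset.univ_sum_single b]
      rw [hb, map_sum]
      refine Finset.sum_congr rfl fun i _ => ?_
      have : Pi.single i (b i) = (b i) • (Pi.single i 1 : Fin m → ℝ) := by
        funext j
        by_cases h : j = i <;> simp [Pi.single_apply, h]
      rw [this, map_smul, smul_eq_mul]
    set wv : Fin m → ℝ := fun i => f (Pi.single i 1) with hwv
    have hwpos : ∀ i, 0 < wv i := by
      intro i
      have : u < f (p (.inr i)) := hub _ (subset_convexHull ℝ _ (Set.mem_range_self _))
      simp only [hp, Sum.elim_inr] at this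
      exact lt_trans hupos this
    set S := ∑ i, wv i with hS
    have hSpos : 0 < S := Finset.sum_pos (fun i _ => hwpos i) (Finset.univ_nonempty_iff.mpr ⟨⟨0, hm⟩⟩)
    refine ⟨fun i => wv i / S, ⟨fun i => div_nonneg (hwpos i).le hSpos.le, ?_⟩, ?_⟩
    · rw [← Finset.sum_div, ← hS, div_self hSpos.ne']
    · intro z hz
      rw [payoff_col]
      have hcolpos : ∀ v, u / S ≤ ∑ i, (wv i / S) * R i v := by
        intro v
        have hcol : u < f (p (.inl v)) := hub _ (subset_convexHull ℝ _ (Set.mem_range_self _))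
        rw [hfform] at hcol
        simp only [hp, Sum.elim_inl] at hcol
        have : (∑ i, (wv i / S) * R i v) = (∑ i, R i v * wv i) / S := by
          rw [Finset.sum_div]
          exact Finset.sum_congr rfl fun i _ => by ring
        rw [this]
        exact div_le_div_of_nonneg_right hcol.le hSpos.le
      have hlb : u / S ≤ ∑ v, (∑ i, (wv i / S) * R i v) * z v := by
        calc u / S = ∑ v, (u / S) * z v := by
              rw [← Finset.mul_sum, hz.2, mul_one]
          _ ≤ ∑ v, (∑ i, (wv i / S) * R i v) * z v := by
              apply Finset.sum_le_sum
              intro v _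
              exact mul_le_mul_of_nonneg_right (hcolpos v) (hz.1 v)
      exact lt_of_lt_of_le (div_pos hupos hSpos) hlb

lemma minimax_key_c {m n : ℕ} (hm : 0 < m) (hn : 0 < n) (R : Matrix (Fin m) (Fin n) ℝ) (c : ℝ) :
    (∃ z ∈ stdSimplex ℝ (Fin n), ∀ y ∈ stdSimplex ℝ (Fin m), matrixPayoff R y z ≤ c) ∨
    (∃ y ∈ stdSimplex ℝ (Fin m), ∀ z ∈ stdSimplex ℝ (Fin n), c < matrixPayoff R y z) := by
  set R' : Matrix (Fin m) (Fin n) ℝ := fun u v => R u v - c with hR'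
  have shift : ∀ y ∈ stdSimplex ℝ (Fin m), ∀ z ∈ stdSimplex ℝ (Fin n),
      matrixPayoff R' y z = matrixPayoff R y z - c := by
    intro y hy z hz
    have h2 : ∑ u, ∑ v, y u * z v = 1 := by
      rw [← Finset.sum_mul_sum, hy.2, hz.2, mul_one]
    have : matrixPayoff R' y z
        = (∑ u, ∑ v, y u * R u v * z v) - c * (∑ u, ∑ v, y u * z v) := by
      simp only [matrixPayoff, Finset.mul_sum, ← Finset.sum_sub_distrib]
      exact Finset.sum_congr rfl fun u _ => Finset.sum_congr rfl fun v _ => by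
        simp only [hR']; ring
    rw [this, h2, mul_one, matrixPayoff]
  rcases minimax_key hm hn R' with ⟨z, hz, hle⟩ | ⟨y, hy, hlt⟩
  · left
    exact ⟨z, hz, fun y hy => by have := hle y hy; rw [shift y hy z hz] at this; linarith⟩
  · right
    exact ⟨y, hy, fun z hz => by have := hlt z hz; rw [shift y hy z hz] at this; linarith⟩

lemma simplex_nonempty (k : ℕ) (hk : 0 < k) : Nonempty (stdSimplex ℝ (Fin k)) := by
  refine ⟨⟨fun _ => (k:ℝ)⁻¹, fun _ => by positivity, ?_⟩⟩
  have : (k:ℝ) ≠ 0 := Nat.cast_ne_zero.mpr hk.ne'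
  simp [Finset.sum_const, this]

lemma coord_le_one {k : ℕ} {y : Fin k → ℝ} (hy : y ∈ stdSimplex ℝ (Fin k)) (u : Fin k) :
    y u ≤ 1 := by
  calc y u ≤ ∑ i, y i := Finset.single_le_sum (fun i _ => hy.1 i) (Finset.mem_univ u)
    _ = 1 := hy.2

lemma payoff_abs_le {m n : ℕ} (R : Matrix (Fin m) (Fin n) ℝ) {y : Fin m → ℝ} {z : Fin n → ℝ}
    (hy : y ∈ stdSimplex ℝ (Fin m)) (hz : z ∈ stdSimplex ℝ (Fin n)) :
    |matrixPayoff R y z| ≤ ∑ u, ∑ v, |R u v| := by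
  calc |matrixPayoff R y z| ≤ ∑ u, |∑ v, y u * R u v * z v| :=
        Finset.abs_sum_le_sum_abs _ _
    _ ≤ ∑ u, ∑ v, |y u * R u v * z v| :=
        Finset.sum_le_sum fun u _ => Finset.abs_sum_le_sum_abs _ _
    _ ≤ ∑ u, ∑ v, |R u v| := by
        refine Finset.sum_le_sum fun u _ => Finset.sum_le_sum fun v _ => ?_
        have h1 : |y u * R u v * z v| = y u * |R u v| * z v := by
          rw [abs_mul, abs_mul, abs_of_nonneg (hy.1 u), abs_of_nonneg (hz.1 v)]
        rw [h1]
        nlinarith [mul_nonneg (sub_nonneg.mpr (coord_le_one hy u)) (abs_nonneg (R u v)),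
          mul_nonneg (mul_nonneg (hy.1 u) (abs_nonneg (R u v)))
            (sub_nonneg.mpr (coord_le_one hz v))]

/-- Minimax theorem for finite matrix games: for any real `m × n` matrix `R`,
`max_{y ∈ Δ_m} min_{z ∈ Δ_n} yᵀRz = min_{z ∈ Δ_n} max_{y ∈ Δ_m} yᵀRz`. -/
theorem matrix_minimax {m n : ℕ} (hm : 0 < m) (hn : 0 < n)
    (R : Matrix (Fin m) (Fin n) ℝ) :
    (⨆ y : stdSimplex ℝ (Fin m), ⨅ z : stdSimplex ℝ (Fin n), matrixPayoff R y z) =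
      ⨅ z : stdSimplex ℝ (Fin n), ⨆ y : stdSimplex ℝ (Fin m), matrixPayoff R y z := by
  classical
  haveI hY : Nonempty (stdSimplex ℝ (Fin m)) := simplex_nonempty m hm
  haveI hZ : Nonempty (stdSimplex ℝ (Fin n)) := simplex_nonempty n hn
  set M : ℝ := ∑ u, ∑ v, |R u v| with hM
  have habs : ∀ (y : stdSimplex ℝ (Fin m)) (z : stdSimplex ℝ (Fin n)),
      |matrixPayoff R y z| ≤ M := fun y z => payoff_abs_le R y.2 z.2
  have hlb : ∀ (y : stdSimplex ℝ (Fin m)) (z : stdSimplex ℝ (Fin n)),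
      -M ≤ matrixPayoff R y z := fun y z => (abs_le.mp (habs y z)).1
  have hub : ∀ (y : stdSimplex ℝ (Fin m)) (z : stdSimplex ℝ (Fin n)),
      matrixPayoff R y z ≤ M := fun y z => (abs_le.mp (habs y z)).2
  have hbbF : ∀ y : stdSimplex ℝ (Fin m),
      BddBelow (Set.range fun z : stdSimplex ℝ (Fin n) => matrixPayoff R y z) :=
    fun y => ⟨-M, by rintro x ⟨z, rfl⟩; exact hlb y z⟩
  have hbaF : ∀ z : stdSimplex ℝ (Fin n),
      BddAbove (Set.range fun y : stdSimplex ℝ (Fin m) => matrixPayoff R y z) :=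
    fun z => ⟨M, by rintro x ⟨y, rfl⟩; exact hub y z⟩
  set g : stdSimplex ℝ (Fin m) → ℝ := fun y => ⨅ z : stdSimplex ℝ (Fin n), matrixPayoff R y z
    with hg
  set h : stdSimplex ℝ (Fin n) → ℝ := fun z => ⨆ y : stdSimplex ℝ (Fin m), matrixPayoff R y z
    with hh
  have hbag : BddAbove (Set.range g) := by
    refine ⟨M, ?_⟩
    rintro x ⟨y, rfl⟩
    exact le_trans (ciInf_le (hbbF y) (Classical.arbitrary _)) (hub y _)
  have hbbh : BddBelow (Set.range h) := by
    refine ⟨-M, ?_⟩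
    rintro x ⟨z, rfl⟩
    exact le_trans (hlb (Classical.arbitrary _) z) (le_ciSup (hbaF z) _)
  apply le_antisymm
  · apply ciSup_le
    intro y
    apply le_ciInf
    intro z
    exact le_trans (ciInf_le (hbbF y) z) (le_ciSup (hbaF z) y)
  · by_contra hcon
    push_neg at hcon
    set A := ⨆ y, g y with hA
    set B := ⨅ z, h z with hB
    set c : ℝ := (A + B) / 2 with hc
    have hAc : A < c := by simp only [hc]; linarith
    have hcB : c < B := by simp only [hc]; linarith
    rcases minimax_key_c hm hn R c with ⟨z, hzmem, hple⟩ | ⟨y, hymem, hplt⟩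
    · have h1 : h ⟨z, hzmem⟩ ≤ c := ciSup_le fun y => hple y y.2
      have h2 : B ≤ h ⟨z, hzmem⟩ := ciInf_le hbbh _
      linarith
    · have h1 : c ≤ g ⟨y, hymem⟩ := le_ciInf fun z => (hplt z z.2).le
      have h2 : g ⟨y, hymem⟩ ≤ A := le_ciSup hbag _
      linarith
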